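/- Fix r ≥ 2 and π ∈ S_r, and let ψ_π(u,v) = (1/(r−1)!)·Σ_{i=1}^r g_i(u)g_{π(i)}(v) with g_j(w) = C(r−1,j−1) w^{j−1}(1−w)^{r−j}. Then the symmetrized function (u,v) ↦ ψ_π(u,v) + ψ_π(v,u) is not constant on [0,1]². -/
import Mathlib


/-- The Bernstein basis polynomial `g_j(w) = C(m, j) wʲ (1−w)^{m−j}` (0-indexed; `r = m+1`). -/
noncomputable def bern (m : ℕ) (j : Fin (m+1)) (w : ℝ) : ℝ :=
  (m.choose (j : ℕ)) * w ^ (j : ℕ) * (1 - w) ^ (m - (j : ℕ))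

lemma bern_zero (m : ℕ) (j : Fin (m+1)) :
    bern m j 0 = if j = 0 then 1 else 0 := by
  rcases eq_or_ne j 0 with h | h
  · simp [bern, h]
  · have hj : (j : ℕ) ≠ 0 := fun hh => h (Fin.ext hh)
    simp [bern, zero_pow hj, h]

lemma bern_one (m : ℕ) (j : Fin (m+1)) :
    bern m j 1 = if j = Fin.last m then 1 else 0 := by
  rcases eq_or_ne j (Fin.last m) with h | h
  · simp [bern, h, Fin.last]
  · have hj : (j : ℕ) < m :=
      lt_of_le_of_ne (Nat.lt_succ_iff.mp j.isLt) (fun hh => h (Fin.ext hh))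
    have h2 : m - (j : ℕ) ≠ 0 := Nat.sub_ne_zero_of_lt hj
    simp [bern, zero_pow h2, h]

lemma bern_half_pos (m : ℕ) (j : Fin (m+1)) : 0 < bern m j (1/2 : ℝ) := by
  have hj : (j : ℕ) ≤ m := Nat.lt_succ_iff.mp j.isLt
  have hch : 0 < (m.choose (j : ℕ) : ℝ) := by exact_mod_cast (Nat.choose_pos hj)
  have hb : (0:ℝ) < (1/2 : ℝ) := by norm_num
  have he : (1:ℝ) - 1/2 = 1/2 := by norm_num
  unfold bern
  rw [he]
  exact mul_pos (mul_pos hch (pow_pos hb _)) (pow_pos hb _)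

lemma sum_shape {n : ℕ} (q : Fin n → Prop) [DecidablePred q] (b : Fin n) (a : Fin n → ℝ) :
    (∑ x : Fin n, if q x then if x = b then a x else 0 else 0)
      = if q b then a b else 0 := by
  have h : ∀ x : Fin n, (if q x then if x = b then a x else 0 else 0)
      = if x = b then (if q x then a x else 0) else 0 := by
    intro x
    by_cases h1 : q x <;> by_cases h2 : x = b <;> simp [h1, h2]
  simp only [h]
  simp [Finset.sum_ite_eq']

/-- For `r = m+1 ≥ 2` and `π ∈ S_r`, the symmetrization
`(u,v) ↦ ψ_π(u,v) + ψ_π(v,u)` of `ψ_π(u,v) = (1/(r−1)!) Σ_i g_i(u) g_{π(i)}(v)`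
is not constant on `[0,1]²`. -/
theorem stmt19 (m : ℕ) (hm : 1 ≤ m) (π : Equiv.Perm (Fin (m+1))) :
    ¬ ∃ c : ℝ, ∀ u ∈ Set.Icc (0:ℝ) 1, ∀ v ∈ Set.Icc (0:ℝ) 1,
      ((Nat.factorial m : ℝ)⁻¹ * ∑ i : Fin (m+1), bern m i u * bern m (π i) v)
        + ((Nat.factorial m : ℝ)⁻¹ * ∑ i : Fin (m+1), bern m i v * bern m (π i) u) = c := by
  rintro ⟨c, hc⟩
  have t0 : (0:ℝ) ∈ Set.Icc (0:ℝ) 1 := by norm_num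
  have t1 : (1:ℝ) ∈ Set.Icc (0:ℝ) 1 := by norm_num
  have th : (1/2:ℝ) ∈ Set.Icc (0:ℝ) 1 := by norm_num
  have h00 := hc 0 t0 0 t0
  have h01 := hc 0 t0 1 t1
  have h0h := hc 0 t0 (1/2) th
  have hfac : (0:ℝ) < (Nat.factorial m : ℝ)⁻¹ := by positivity
  simp only [bern_zero, bern_one, ite_mul, one_mul, zero_mul, mul_ite, mul_one, mul_zero,
    Finset.sum_ite_eq', Finset.mem_univ, if_true] at h00 h01 h0h
  simp only [sum_shape] at h00 h01
  have hlast : Fin.last m ≠ (0 : Fin (m+1)) := by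
    intro h
    have := congrArg (Fin.val) h
    simp [Fin.last] at this
    omega
  by_cases hπ : π 0 = 0
  · have h1 : π 0 ≠ Fin.last m := by rw [hπ]; exact fun h => hlast h.symm
    have h2 : π (Fin.last m) ≠ 0 := by
      intro h
      exact hlast (π.injective (h.trans hπ.symm))
    rw [if_pos hπ] at h00
    rw [if_neg h1, if_neg h2] at h01
    simp only [mul_one, mul_zero, add_zero] at h00 h01
    rw [← h01] at h00
    linarith
  · rw [if_neg hπ] at h00
    simp only [mul_zero, add_zero] at h00
    rw [← h00] at h0h
    have hpos : 0 < (Nat.factorial m : ℝ)⁻¹ * bern m (π 0) (1/2) :=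
      mul_pos hfac (bern_half_pos m (π 0))
    have hnn : 0 ≤ ∑ i : Fin (m+1), if π i = 0 then bern m i (1/2) else 0 := by
      apply Finset.sum_nonneg
      intro i _
      split
      · exact le_of_lt (bern_half_pos m i)
      · exact le_refl 0
    nlinarith
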